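/- Let T: X ⇉ X* be set-valued and ρ ≥ 0. The Bregman–Yosida regularization T_ρ = (ρ∇φ* + T⁻¹)⁻¹ is monotone if and only if T⁻¹ is hypomonotone relative to ∇φ* with parameter ρ, i.e. ⟨u − v, x − y⟩ ≥ −ρ⟨∇φ*(x) − ∇φ*(y), x − y⟩ for all (x,u), (y,v) ∈ gph T⁻¹. -/
import Mathlib


open scoped RealInnerProductSpace

/-- `T_ρ = (ρ∇φ* + T⁻¹)⁻¹` is monotone iff `T⁻¹` is hypomonotone relative to `∇φ*`
with parameter `ρ`. -/
theorem stmt4 {X : Type*} [NormedAddCommGroup X] [InnerProductSpace ℝ X] [CompleteSpace X]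
    (φ : X → ℝ) (gφ gφs : X → X)
    (hconv : StrictConvexOn ℝ Set.univ φ)
    (hgrad : ∀ x, HasGradientAt φ (gφ x) x)
    (hsc : Filter.Tendsto (fun x => φ x / ‖x‖) (Filter.cocompact X) Filter.atTop)
    (hinv1 : Function.LeftInverse gφs gφ)
    (hinv2 : Function.RightInverse gφs gφ)
    (hsmono : ∀ u v : X, u ≠ v → 0 < ⟪gφs u - gφs v, u - v⟫)
    (T : X → Set X) (ρ : ℝ) (hρ : 0 ≤ ρ) :
    (∀ x y v w : X, v ∈ T (x - ρ • gφs v) → w ∈ T (y - ρ • gφs w) →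
        0 ≤ ⟪v - w, x - y⟫) ↔
      (∀ u v x y : X, x ∈ T u → y ∈ T v →
        -(ρ * ⟪gφs x - gφs y, x - y⟫) ≤ ⟪u - v, x - y⟫) := by
  constructor
  · intro hmono u v x y hx hy
    have hx' : x ∈ T ((u + ρ • gφs x) - ρ • gφs x) := by simpa using hx
    have hy' : y ∈ T ((v + ρ • gφs y) - ρ • gφs y) := by simpa using hy
    have h := hmono (u + ρ • gφs x) (v + ρ • gφs y) x y hx' hy'
    have heq : ⟪x - y, (u + ρ • gφs x) - (v + ρ • gφs y)⟫
        = ⟪u - v, x - y⟫ + ρ * ⟪gφs x - gφs y, x - y⟫ := by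
      simp [inner_sub_left, inner_sub_right, inner_add_right, real_inner_smul_right,
        real_inner_comm]
      ring
    rw [heq] at h
    linarith
  · intro hhyp x y v w hv hw
    have h := hhyp (x - ρ • gφs v) (y - ρ • gφs w) v w hv hw
    have heq : ⟪(x - ρ • gφs v) - (y - ρ • gφs w), v - w⟫
        = ⟪v - w, x - y⟫ - ρ * ⟪gφs v - gφs w, v - w⟫ := by
      simp [inner_sub_left, inner_sub_right, real_inner_smul_left, real_inner_smul_right, real_inner_comm]
      ring
    rw [heq] at h
    linarith
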